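/- Let 𝔤 be a finite-dimensional complex Lie algebra equipped with a conjugation σ that is a Lie algebra automorphism. Suppose 𝔤 = 𝔨 ⊕ 𝔭 is an internal direct sum of σ-stable complex subspaces, where 𝔨 is a Lie subalgebra and ⁅𝔨, 𝔭⁆ ⊆ 𝔭, and suppose that every complex subspace W ⊆ 𝔭 with ⁅𝔨, W⁆ ⊆ W and σ(W) = W equals 0 or 𝔭 (i.e. the real form of 𝔭 is an irreducible 𝔨-module). Let E be a complex Lie subalgebra of 𝔤 with 𝔨 ⊆ E and E + σ(E) = 𝔤. Then either E = 𝔤, or, setting 𝔞 := E ∩ 𝔭: E = 𝔨 ⊕ 𝔞, 𝔭 = 𝔞 ⊕ σ(𝔞) (internal direct sum), and the only complex subspaces W ⊆ 𝔞 with ⁅𝔨, W⁆ ⊆ W are 0 and 𝔞. -/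

import Mathlib

/-- Let `𝔤` be a finite-dimensional complex Lie algebra with conjugation `σ`
which is a Lie algebra automorphism, `𝔤 = 𝔨 ⊕ 𝔭` an internal direct sum of σ-stable subspaces
with `𝔨` a Lie subalgebra and `⁅𝔨, 𝔭⁆ ⊆ 𝔭`, such that the only σ-stable `𝔨`-submodules of `𝔭`
are `0` and `𝔭`.  If `E` is a complex Lie subalgebra with `𝔨 ⊆ E` and `E + σ(E) = 𝔤`, then
either `E = 𝔤`, or `E = 𝔨 ⊕ 𝔞` with `𝔞 := E ∩ 𝔭`, `𝔭 = 𝔞 ⊕ σ(𝔞)`, and `𝔞` is an irreducible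
`𝔨`-module. -/
theorem subalgebra_of_irreducible_isotropy {𝔤 : Type*} [LieRing 𝔤] [LieAlgebra ℂ 𝔤]
    [FiniteDimensional ℂ 𝔤]
    (σ : 𝔤 →ₛₗ[starRingEnd ℂ] 𝔤)
    (hσinv : ∀ x, σ (σ x) = x)
    (hσlie : ∀ x y, σ ⁅x, y⁆ = ⁅σ x, σ y⁆)
    (𝔨 : LieSubalgebra ℂ 𝔤) (𝔭 : Submodule ℂ 𝔤)
    (hcompl : IsCompl (𝔨 : Submodule ℂ 𝔤) 𝔭)
    (hσ𝔨 : Submodule.map σ (𝔨 : Submodule ℂ 𝔤) = 𝔨)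
    (hσ𝔭 : Submodule.map σ 𝔭 = 𝔭)
    (hbr : ∀ k ∈ 𝔨, ∀ p ∈ 𝔭, ⁅k, p⁆ ∈ 𝔭)
    (hirr : ∀ W : Submodule ℂ 𝔤, W ≤ 𝔭 → (∀ k ∈ 𝔨, ∀ w ∈ W, ⁅k, w⁆ ∈ W) →
      Submodule.map σ W = W → W = ⊥ ∨ W = 𝔭)
    (E : LieSubalgebra ℂ 𝔤)
    (h𝔨E : 𝔨 ≤ E)
    (hsum : ∀ v : 𝔤, ∃ a ∈ E, ∃ b ∈ E, v = a + σ b) :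
    E = ⊤ ∨
      ((E : Submodule ℂ 𝔤) = (𝔨 : Submodule ℂ 𝔤) ⊔ ((E : Submodule ℂ 𝔤) ⊓ 𝔭) ∧
        ((E : Submodule ℂ 𝔤) ⊓ 𝔭) ⊔ Submodule.map σ ((E : Submodule ℂ 𝔤) ⊓ 𝔭) = 𝔭 ∧
        ((E : Submodule ℂ 𝔤) ⊓ 𝔭) ⊓ Submodule.map σ ((E : Submodule ℂ 𝔤) ⊓ 𝔭) = ⊥ ∧
        (∀ W : Submodule ℂ 𝔤, W ≤ (E : Submodule ℂ 𝔤) ⊓ 𝔭 →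
          (∀ k ∈ 𝔨, ∀ w ∈ W, ⁅k, w⁆ ∈ W) → W = ⊥ ∨ W = (E : Submodule ℂ 𝔤) ⊓ 𝔭)) := by
  classical
  set A : Submodule ℂ 𝔤 := (E : Submodule ℂ 𝔤) ⊓ 𝔭 with hAdef
  -- basic facts about σ
  have hσmem𝔨 : ∀ x ∈ 𝔨, σ x ∈ 𝔨 := by
    intro x hx
    have : σ x ∈ Submodule.map σ (𝔨 : Submodule ℂ 𝔤) := Submodule.mem_map_of_mem hx
    rwa [hσ𝔨] at this
  have hσσ : ∀ X : Submodule ℂ 𝔤, Submodule.map σ (Submodule.map σ X) = X := by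
    intro X
    ext x
    constructor
    · rintro ⟨y, ⟨z, hz, rfl⟩, rfl⟩
      rw [hσinv]; exact hz
    · intro hx
      exact ⟨σ x, ⟨x, hx, rfl⟩, hσinv x⟩
  -- A is 𝔨-stable
  have hAle𝔭 : A ≤ 𝔭 := inf_le_right
  have hAleE : A ≤ (E : Submodule ℂ 𝔤) := inf_le_left
  have hAstab : ∀ k ∈ 𝔨, ∀ a ∈ A, ⁅k, a⁆ ∈ A := by
    intro k hk a ha
    exact ⟨E.lie_mem (h𝔨E hk) ha.1, hbr k hk a ha.2⟩
  -- image of a 𝔨-stable module is 𝔨-stable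
  have hstabσ : ∀ W : Submodule ℂ 𝔤, (∀ k ∈ 𝔨, ∀ w ∈ W, ⁅k, w⁆ ∈ W) →
      ∀ k ∈ 𝔨, ∀ x ∈ Submodule.map σ W, ⁅k, x⁆ ∈ Submodule.map σ W := by
    rintro W hW k hk x ⟨w, hw, rfl⟩
    refine ⟨⁅σ k, w⁆, hW _ (hσmem𝔨 k hk) _ hw, ?_⟩
    rw [hσlie, hσinv]
  -- sup of stable is stable
  have hstabsup : ∀ W V : Submodule ℂ 𝔤, (∀ k ∈ 𝔨, ∀ w ∈ W, ⁅k, w⁆ ∈ W) →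
      (∀ k ∈ 𝔨, ∀ v ∈ V, ⁅k, v⁆ ∈ V) →
      ∀ k ∈ 𝔨, ∀ x ∈ W ⊔ V, ⁅k, x⁆ ∈ W ⊔ V := by
    intro W V hW hV k hk x hx
    obtain ⟨w, hw, v, hv, rfl⟩ := Submodule.mem_sup.mp hx
    rw [lie_add]
    exact Submodule.add_mem_sup (hW k hk w hw) (hV k hk v hv)
  have hσAle𝔭 : Submodule.map σ A ≤ 𝔭 := by
    rw [← hσ𝔭]; exact Submodule.map_mono hAle𝔭
  -- E = 𝔨 ⊔ A, always
  have hE1 : (E : Submodule ℂ 𝔤) = (𝔨 : Submodule ℂ 𝔤) ⊔ A := by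
    apply le_antisymm
    · intro e he
      have : e ∈ (𝔨 : Submodule ℂ 𝔤) ⊔ 𝔭 := by
        rw [hcompl.codisjoint.eq_top]; trivial
      obtain ⟨k, hk, p, hp, rfl⟩ := Submodule.mem_sup.mp this
      have hpE : p ∈ (E : Submodule ℂ 𝔤) := by
        have h2 : (k + p) - k ∈ (E : Submodule ℂ 𝔤) := sub_mem he (h𝔨E hk)
        simpa using h2
      exact Submodule.add_mem_sup hk ⟨hpE, hp⟩
    · exact sup_le h𝔨E hAleE
  -- U := A ⊓ σA
  set U : Submodule ℂ 𝔤 := A ⊓ Submodule.map σ A with hUdef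
  have hσU : Submodule.map σ U = U := by
    apply le_antisymm
    · rintro x ⟨u, ⟨hu1, hu2⟩, rfl⟩
      refine ⟨?_, Submodule.mem_map_of_mem hu1⟩
      obtain ⟨a, ha, rfl⟩ := hu2
      rw [hσinv]; exact ha
    · rintro u ⟨hu1, hu2⟩
      refine ⟨σ u, ⟨?_, Submodule.mem_map_of_mem hu1⟩, hσinv u⟩
      obtain ⟨a, ha, rfl⟩ := hu2
      rw [hσinv]; exact ha
  have hUstab : ∀ k ∈ 𝔨, ∀ u ∈ U, ⁅k, u⁆ ∈ U := by
    rintro k hk u ⟨hu1, hu2⟩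
    exact ⟨hAstab k hk u hu1, hstabσ A hAstab k hk u hu2⟩
  rcases hirr U (le_trans inf_le_left hAle𝔭) hUstab hσU with hU | hU
  · -- U = ⊥
    set W' : Submodule ℂ 𝔤 := A ⊔ Submodule.map σ A with hW'def
    have hσW' : Submodule.map σ W' = W' := by
      rw [hW'def, Submodule.map_sup, hσσ, sup_comm]
    have hW'stab : ∀ k ∈ 𝔨, ∀ x ∈ W', ⁅k, x⁆ ∈ W' :=
      hstabsup _ _ hAstab (hstabσ A hAstab)
    rcases hirr W' (sup_le hAle𝔭 hσAle𝔭) hW'stab hσW' with hW' | hW'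
    · -- W' = ⊥, so A = ⊥ and 𝔭 = ⊥
      have hA : A = ⊥ := le_bot_iff.mp (hW' ▸ (le_sup_left : A ≤ W'))
      have h𝔭 : 𝔭 = ⊥ := by
        rw [← le_bot_iff]
        intro p hp
        obtain ⟨a, ha, b, hb, rfl⟩ := hsum p
        have hE𝔨 : (E : Submodule ℂ 𝔤) ≤ (𝔨 : Submodule ℂ 𝔤) := by
          rw [hE1, hA, sup_bot_eq]
        have : a + σ b ∈ (𝔨 : Submodule ℂ 𝔤) :=
          add_mem (hE𝔨 ha) (hσmem𝔨 b (hE𝔨 hb))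
        exact (hcompl.disjoint.le_bot) ⟨this, hp⟩
      refine Or.inr ⟨hE1, ?_, ?_, ?_⟩
      · exact hW'.trans h𝔭.symm
      · exact hU
      · intro W hW _
        left
        rw [← le_bot_iff, ← hA]; exact hW
    · -- W' = 𝔭 : the main case
      refine Or.inr ⟨hE1, hW', hU, ?_⟩
      intro W hWA hWstab
      by_cases hWbot : W = ⊥
      · exact Or.inl hWbot
      right
      have hWsup : W ⊔ Submodule.map σ W = 𝔭 := by
        rcases hirr (W ⊔ Submodule.map σ W)
          (sup_le (le_trans hWA hAle𝔭)
            (by rw [← hσ𝔭]; exact Submodule.map_mono (le_trans hWA hAle𝔭)))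
          (hstabsup _ _ hWstab (hstabσ W hWstab))
          (by rw [Submodule.map_sup, hσσ, sup_comm]) with h | h
        · exact absurd (le_bot_iff.mp (h ▸ (le_sup_left : W ≤ _))) hWbot
        · exact h
      apply le_antisymm hWA
      intro a ha
      have : a ∈ W ⊔ Submodule.map σ W := by rw [hWsup]; exact hAle𝔭 ha
      obtain ⟨w, hw, v, hv, rfl⟩ := Submodule.mem_sup.mp this
      have hvU : v ∈ U := by
        constructor
        · have : w ∈ A := hWA hw
          simpa using sub_mem ha this
        · exact Submodule.map_mono hWA hv
      rw [hU] at hvU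
      simp only [Submodule.mem_bot] at hvU
      rw [hvU, add_zero]
      exact hw
  · -- U = 𝔭 : E = ⊤
    left
    have h𝔭E : 𝔭 ≤ (E : Submodule ℂ 𝔤) := by
      rw [← hU]; exact le_trans inf_le_left hAleE
    have : (E : Submodule ℂ 𝔤) = ⊤ := by
      rw [← top_le_iff, ← hcompl.codisjoint.eq_top]
      exact sup_le h𝔨E h𝔭E
    rw [← LieSubalgebra.toSubmodule_inj]
    simpa using this
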